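/- Adding one POI never increases potential score: if I' = I ∪ {p} with p ∉ I and I' satisfies all category constraints, then score(p) + extra(I') ≤ extra(I), and hence pot(I') ≤ pot(I). -/

import Mathlib

noncomputable def topSum (S : Multiset ℝ) (k : ℕ) : ℝ :=
  ((S.sort (· ≤ ·)).reverse.take k).sum

noncomputable def extra {ι K : Type} [DecidableEq ι] [DecidableEq K]
    (P : Finset ι) (Kset : Finset K) (cat : ι → K) (score : ι → ℝ)
    (maxk : K → ℕ) (I : Finset ι) : ℝ :=
  ∑ k ∈ Kset, topSum (((P \ I).filter (fun p => cat p = k)).val.map score)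
      (maxk k - (I.filter (fun p => cat p = k)).card)

noncomputable def pot {ι K : Type} [DecidableEq ι] [DecidableEq K]
    (P : Finset ι) (Kset : Finset K) (cat : ι → K) (score : ι → ℝ)
    (maxk : K → ℕ) (I : Finset ι) : ℝ :=
  (∑ p ∈ I, score p) + extra P Kset cat score maxk I

lemma take_sum_le : ∀ (L : List ℝ) (M : List ℝ), M.Sublist L →
    L.Pairwise (· ≥ ·) → (∀ x ∈ L, 0 ≤ x) → ∀ k, (M.take k).sum ≤ (L.take k).sum := by
  intro L
  induction L with
  | nil => intro M hM _ _ k; simp [List.sublist_nil.mp hM]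
  | cons a L ih =>
    intro M hM hs h0 k
    have hs' := List.pairwise_cons.mp hs
    have h0' : ∀ x ∈ L, 0 ≤ x := fun x hx => h0 x (List.mem_cons_of_mem _ hx)
    cases k with
    | zero => simp
    | succ k =>
      simp only [List.take_succ_cons, List.sum_cons]
      rcases List.sublist_cons_iff.mp hM with h | ⟨r, rfl, hr⟩
      · cases M with
        | nil =>
          simp only [List.take_nil, List.sum_nil]
          have h1 : 0 ≤ (List.take k L).sum :=
            List.sum_nonneg (fun x hx => h0' x (List.take_subset k L hx))
          have ha := h0 a List.mem_cons_self
          linarith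
        | cons b M' =>
          have hbL : b ∈ L := h.subset List.mem_cons_self
          have hba : a ≥ b := hs'.1 b hbL
          have hM'L : M'.Sublist L := (List.sublist_cons_self b M').trans h
          have := ih M' hM'L hs'.2 h0' k
          simp only [List.take_succ_cons, List.sum_cons]
          linarith
      · have := ih r hr hs'.2 h0' k
        simp only [List.take_succ_cons, List.sum_cons]
        linarith

lemma sum_le_topSum {t S : Multiset ℝ} (hts : t ≤ S) {k : ℕ} (hk : t.card ≤ k)
    (h0 : ∀ x ∈ S, 0 ≤ x) : t.sum ≤ topSum S k := by
  classical
  set L := (S.sort (· ≤ ·)).reverse with hL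
  set M := (t.sort (· ≤ ·)).reverse with hMdef
  have hsub : (t.sort (· ≤ ·)).Sublist (S.sort (· ≤ ·)) := by
    apply List.sublist_of_subperm_of_pairwise _ (Multiset.pairwise_sort _ _) (Multiset.pairwise_sort _ _)
    rw [← Multiset.coe_le, Multiset.sort_eq, Multiset.sort_eq]
    exact hts
  have hML : M.Sublist L := hsub.reverse
  have hLs : L.Pairwise (· ≥ ·) := by
    rw [hL]
    exact List.pairwise_reverse.mpr (Multiset.pairwise_sort S (· ≤ ·))
  have hL0 : ∀ x ∈ L, 0 ≤ x := by
    intro x hx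
    apply h0
    rw [hL, List.mem_reverse] at hx
    rwa [← Multiset.mem_sort (· ≤ ·)]
  have hlen : M.length ≤ k := by
    rw [hMdef, List.length_reverse, Multiset.length_sort]
    exact hk
  have hsum : t.sum = (M.take k).sum := by
    rw [List.take_of_length_le hlen, hMdef, List.sum_reverse, ← Multiset.sum_coe,
      Multiset.sort_eq]
  rw [hsum]
  exact take_sum_le L M hML hLs hL0 k

lemma key_ineq (x : ℝ) (T : Multiset ℝ) {m : ℕ} (hm : 1 ≤ m)
    (h0 : ∀ y ∈ x ::ₘ T, 0 ≤ y) :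
    x + topSum T (m - 1) ≤ topSum (x ::ₘ T) m := by
  classical
  set LT := (T.sort (· ≤ ·)).reverse with hLT
  have hcoe : (LT : Multiset ℝ) = T := by
    rw [hLT, Multiset.coe_reverse, Multiset.sort_eq]
  have hu : ((LT.take (m - 1) : List ℝ) : Multiset ℝ) ≤ T := by
    rw [← hcoe, Multiset.coe_le]
    exact (List.take_sublist _ _).subperm
  have hts : (x ::ₘ ((LT.take (m - 1) : List ℝ) : Multiset ℝ)) ≤ x ::ₘ T :=
    Multiset.cons_le_cons x hu
  have hcard : (x ::ₘ ((LT.take (m - 1) : List ℝ) : Multiset ℝ)).card ≤ m := by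
    rw [Multiset.card_cons, Multiset.coe_card, List.length_take]
    omega
  have := sum_le_topSum hts hcard h0
  rwa [Multiset.sum_cons, Multiset.sum_coe] at this

theorem pot_insert_le {ι K : Type} [DecidableEq ι] [DecidableEq K]
    (P : Finset ι) (Kset : Finset K) (cat : ι → K) (score : ι → ℝ)
    (maxk : K → ℕ)
    (hscore : ∀ q, 0 ≤ score q)
    (hcat : ∀ q ∈ P, cat q ∈ Kset)
    (I : Finset ι) (p : ι)
    (hIP : I ⊆ P) (hpP : p ∈ P) (hp : p ∉ I)
    (hconstr : ∀ k, ((insert p I).filter (fun q => cat q = k)).card ≤ maxk k) :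
    score p + extra P Kset cat score maxk (insert p I)
        ≤ extra P Kset cat score maxk I ∧
    pot P Kset cat score maxk (insert p I) ≤ pot P Kset cat score maxk I := by
  classical
  set k₀ := cat p with hk₀
  have hk₀K : k₀ ∈ Kset := hcat p hpP
  set f : Finset ι → K → ℝ := fun I' k =>
    topSum (((P \ I').filter (fun q => cat q = k)).val.map score)
      (maxk k - (I'.filter (fun q => cat q = k)).card) with hf
  have hextra : ∀ I', extra P Kset cat score maxk I' = ∑ k ∈ Kset, f I' k := by
    intro I'; rfl
  -- terms away from k₀ are unchanged
  have hrest : ∀ k ∈ Kset.erase k₀, f (insert p I) k = f I k := by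
    intro k hk
    have hne : cat p ≠ k := fun h => (Finset.mem_erase.mp hk).1 (by rw [hk₀, h])
    have h1 : (insert p I).filter (fun q => cat q = k) = I.filter (fun q => cat q = k) := by
      rw [Finset.filter_insert, if_neg hne]
    have h2 : (P \ insert p I).filter (fun q => cat q = k)
        = (P \ I).filter (fun q => cat q = k) := by
      rw [Finset.sdiff_insert, Finset.filter_erase, Finset.erase_eq_of_notMem]
      simp only [Finset.mem_filter]
      exact fun h => hne h.2
    rw [hf]
    simp only [h1, h2]
  -- the k₀ term
  have hpfilter : p ∈ (P \ I).filter (fun q => cat q = k₀) := by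
    simp [Finset.mem_filter, Finset.mem_sdiff, hpP, hp, hk₀]
  have hA : (P \ insert p I).filter (fun q => cat q = k₀)
      = ((P \ I).filter (fun q => cat q = k₀)).erase p := by
    rw [Finset.sdiff_insert, Finset.filter_erase]
  have hcount : ((insert p I).filter (fun q => cat q = k₀)).card
      = (I.filter (fun q => cat q = k₀)).card + 1 := by
    rw [Finset.filter_insert, if_pos rfl, Finset.card_insert_of_notMem]
    simp [Finset.mem_filter, hp]
  have hc : (I.filter (fun q => cat q = k₀)).card + 1 ≤ maxk k₀ := by
    have := hconstr k₀
    omega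
  set c := (I.filter (fun q => cat q = k₀)).card with hcdef
  set A := (P \ I).filter (fun q => cat q = k₀) with hAdef
  have hmap : A.val.map score = score p ::ₘ (A.val.erase p).map score := by
    conv_lhs => rw [← Multiset.cons_erase (Finset.mem_def.mp hpfilter)]
    rw [Multiset.map_cons]
  have hkey : score p + f (insert p I) k₀ ≤ f I k₀ := by
    rw [hf]
    simp only [hA, hcount]
    rw [Finset.erase_val]
    have hm : 1 ≤ maxk k₀ - c := by omega
    have hm' : maxk k₀ - (c + 1) = maxk k₀ - c - 1 := by omega
    rw [hm', hmap]
    apply key_ineq (score p) _ hm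
    rw [← hmap]
    intro y hy
    obtain ⟨q, _, rfl⟩ := Multiset.mem_map.mp hy
    exact hscore q
  have h1 : score p + extra P Kset cat score maxk (insert p I)
      ≤ extra P Kset cat score maxk I := by
    rw [hextra, hextra, ← Finset.add_sum_erase Kset _ hk₀K,
      ← Finset.add_sum_erase Kset _ hk₀K, Finset.sum_congr rfl hrest]
    linarith
  refine ⟨h1, ?_⟩
  unfold pot
  rw [Finset.sum_insert hp]
  linarith
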